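/- The converse of the height criterion for networks fails: there exists a rooted phylogenetic network N and distinct leaves i, j, k such that the triplet ij|k is consistent with N but h_N(i,j) ≥ h_N(i,k) and h_N(i,j) ≥ h_N(j,k). -/

import Mathlib

/-- A directed walk of length `n` (number of edges) from `u` to `v` in the digraph `E`. -/
def DiWalk {V : Type} (E : V → V → Prop) (u v : V) (n : ℕ) : Prop :=
  ∃ f : Fin (n + 1) → V, f 0 = u ∧ f (Fin.last n) = v ∧
    ∀ i : Fin n, E (f i.castSucc) (f i.succ)

/-- A rooted phylogenetic network on the taxa set `X`: a finite rooted directed acyclic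
graph in which every node is reachable from the root, the root has no incoming edge,
and the sinks are exactly the leaves, which are distinctly labeled by `X`. -/
structure PhyloNet (X : Type) where
  V : Type
  [fin : Fintype V]
  edge : V → V → Prop
  acyclic : ∀ v, ¬ Relation.TransGen edge v v
  root : V
  root_src : ∀ v, ¬ edge v root
  reach : ∀ v, Relation.ReflTransGen edge root v
  leaf : X → V
  leaf_inj : Function.Injective leaf
  leaf_sink : ∀ (x : X) (v : V), ¬ edge (leaf x) v
  sink_leaf : ∀ v : V, (∀ w, ¬ edge v w) → ∃ x, v = leaf x

/-- `u` is an ancestor of `v` (there is a directed path from `u` to `v`). -/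
def PhyloNet.anc {X : Type} (N : PhyloNet X) (u v : N.V) : Prop :=
  Relation.ReflTransGen N.edge u v

/-- `d(v,r)`: the length of the longest directed path from the root to `v`. -/
noncomputable def PhyloNet.dep {X : Type} (N : PhyloNet X) (v : N.V) : ℕ :=
  sSup {n | DiWalk N.edge N.root v n}

/-- `l_N`: the length of the longest directed path from the root to a leaf. -/
noncomputable def PhyloNet.lN {X : Type} (N : PhyloNet X) : ℕ :=
  sSup {n | ∃ x : X, DiWalk N.edge N.root (N.leaf x) n}

/-- `c` is a lowest common ancestor of `u` and `v`: a common ancestor no proper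
descendant of which is a common ancestor of `u` and `v`. -/
def PhyloNet.IsLCA {X : Type} (N : PhyloNet X) (u v c : N.V) : Prop :=
  N.anc c u ∧ N.anc c v ∧ ∀ w, N.anc c w → N.anc w u → N.anc w v → w = c

/-- The height function of the network `N`:
`h_N(i,j) = min { l_N − d(c,r) : c a lowest common ancestor of i and j }`. -/
noncomputable def PhyloNet.hN {X : Type} (N : PhyloNet X) (i j : X) : ℕ :=
  sInf {m | ∃ c : N.V, N.IsLCA (N.leaf i) (N.leaf j) c ∧ m = N.lN - N.dep c}

/-- `f` is a directed path (walk with no repeated node) from `u` to `v`. -/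
def IsDiPath {V : Type} (E : V → V → Prop) {n : ℕ} (f : Fin (n + 1) → V) (u v : V) : Prop :=
  f 0 = u ∧ f (Fin.last n) = v ∧ (∀ i : Fin n, E (f i.castSucc) (f i.succ)) ∧
    Function.Injective f

/-- Two paths are internally node-disjoint: every common node is an endpoint of both. -/
def IntDisj {V : Type} {m n : ℕ} (f : Fin (m + 1) → V) (g : Fin (n + 1) → V) : Prop :=
  ∀ (a : Fin (m + 1)) (b : Fin (n + 1)), f a = g b →
    (a = 0 ∨ a = Fin.last m) ∧ (b = 0 ∨ b = Fin.last n)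

/-- The triplet `ij|k` is consistent with the network `N`: `N` contains distinct nodes
`u`, `v` and pairwise internally node-disjoint directed paths
`u → i`, `u → j`, `v → u`, and `v → k`. -/
def PhyloNet.TripCons {X : Type} (N : PhyloNet X) (i j k : X) : Prop :=
  ∃ u v : N.V, u ≠ v ∧
    ∃ (a b c d : ℕ) (p : Fin (a + 1) → N.V) (q : Fin (b + 1) → N.V)
      (s : Fin (c + 1) → N.V) (t : Fin (d + 1) → N.V),
      IsDiPath N.edge p u (N.leaf i) ∧ IsDiPath N.edge q u (N.leaf j) ∧
      IsDiPath N.edge s v u ∧ IsDiPath N.edge t v (N.leaf k) ∧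
      IntDisj p q ∧ IntDisj p s ∧ IntDisj p t ∧ IntDisj q s ∧ IntDisj q t ∧ IntDisj s t

/-! ### Auxiliary construction: an explicit 7-node network -/

inductive Nd : Type
  | r | v | u | w | li | lj | lk
  deriving DecidableEq

instance : Fintype Nd :=
  ⟨⟨{Nd.r, Nd.v, Nd.u, Nd.w, Nd.li, Nd.lj, Nd.lk}, by decide⟩, by intro x; cases x <;> decide⟩

namespace Nd

def eB : Nd → Nd → Bool
  | .r, .v | .v, .u | .v, .w | .u, .w | .u, .li | .u, .lj | .w, .lk => true
  | _, _ => false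

def E (a b : Nd) : Prop := eB a b = true

instance (a b : Nd) : Decidable (E a b) := inferInstanceAs (Decidable (_ = true))

/-- rank function: every edge strictly increases it by at least one -/
def ρ : Nd → ℕ
  | .r => 0 | .v => 1 | .u => 2 | .w => 3 | .li => 3 | .lj => 3 | .lk => 4

lemma edge_rho : ∀ a b : Nd, E a b → ρ a + 1 ≤ ρ b := by decide

lemma transGen_rho {a b : Nd} (h : Relation.TransGen E a b) : ρ a < ρ b := by
  induction h with
  | single h => exact edge_rho _ _ h
  | tail _ h ih => exact ih.trans (edge_rho _ _ h)

def descList : Nd → List Nd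
  | .r => [.r, .v, .u, .w, .li, .lj, .lk]
  | .v => [.v, .u, .w, .li, .lj, .lk]
  | .u => [.u, .w, .li, .lj, .lk]
  | .w => [.w, .lk]
  | .li => [.li]
  | .lj => [.lj]
  | .lk => [.lk]

def reachB (a b : Nd) : Bool := b ∈ descList a

lemma reachB_refl : ∀ b : Nd, reachB b b = true := by decide

lemma reachB_head : ∀ a c b : Nd, E a c → reachB c b = true → reachB a b = true := by decide

lemma rtg_reachB {a b : Nd} (h : Relation.ReflTransGen E a b) : reachB a b = true := by
  induction h using Relation.ReflTransGen.head_induction_on with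
  | refl => exact reachB_refl b
  | head hst _ ih => exact reachB_head _ _ _ hst ih

/- explicit reachability facts -/
lemma anc_r_v : Relation.ReflTransGen E .r .v :=
  Relation.ReflTransGen.single (by decide)
lemma anc_v_u : Relation.ReflTransGen E .v .u :=
  Relation.ReflTransGen.single (by decide)
lemma anc_r_u : Relation.ReflTransGen E .r .u := anc_r_v.trans anc_v_u
lemma anc_u_w : Relation.ReflTransGen E .u .w :=
  Relation.ReflTransGen.single (by decide)
lemma anc_u_li : Relation.ReflTransGen E .u .li :=
  Relation.ReflTransGen.single (by decide)
lemma anc_u_lj : Relation.ReflTransGen E .u .lj :=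
  Relation.ReflTransGen.single (by decide)
lemma anc_u_lk : Relation.ReflTransGen E .u .lk :=
  anc_u_w.trans (Relation.ReflTransGen.single (by decide))

lemma walk_rho {a b : Nd} {n : ℕ} (h : DiWalk E a b n) : ρ a + n ≤ ρ b := by
  obtain ⟨f, h0, hl, he⟩ := h
  have key : ∀ i : Fin (n + 1), ρ a + i.val ≤ ρ (f i) := by
    intro i
    induction i using Fin.induction with
    | zero => simp [h0]
    | succ i ih =>
        have h1 := edge_rho _ _ (he i)
        have : i.succ.val = i.castSucc.val + 1 := by simp
        omega
  have := key (Fin.last n)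
  simpa [hl] using this

end Nd

/-- The counterexample network on three taxa. -/
def Net : PhyloNet (Fin 3) where
  V := Nd
  edge := Nd.E
  acyclic := fun v h => lt_irrefl _ (Nd.transGen_rho h)
  root := Nd.r
  root_src := by decide
  reach := by
    intro v
    cases v with
    | r => exact Relation.ReflTransGen.refl
    | v => exact Nd.anc_r_v
    | u => exact Nd.anc_r_u
    | w => exact Nd.anc_r_u.trans Nd.anc_u_w
    | li => exact Nd.anc_r_u.trans Nd.anc_u_li
    | lj => exact Nd.anc_r_u.trans Nd.anc_u_lj
    | lk => exact Nd.anc_r_u.trans Nd.anc_u_lk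
  leaf := fun x => match x with
    | 0 => Nd.li
    | 1 => Nd.lj
    | 2 => Nd.lk
  leaf_inj := by decide
  leaf_sink := by decide
  sink_leaf := by
    intro v h
    cases v with
    | r => exact absurd (by decide : Nd.E .r .v) (h _)
    | v => exact absurd (by decide : Nd.E .v .u) (h _)
    | u => exact absurd (by decide : Nd.E .u .w) (h _)
    | w => exact absurd (by decide : Nd.E .w .lk) (h _)
    | li => exact ⟨0, rfl⟩
    | lj => exact ⟨1, rfl⟩
    | lk => exact ⟨2, rfl⟩

attribute [reducible] Net

instance NetEdgeDec (a b : Nd) : Decidable (Net.edge a b) :=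
  inferInstanceAs (Decidable (Nd.E a b))

instance : DecidableEq Net.V := inferInstanceAs (DecidableEq Nd)

instance : Fintype Net.V := inferInstanceAs (Fintype Nd)

lemma Net_dep (c : Nd) (f : Fin (Nd.ρ c + 1) → Nd) (h0 : f 0 = Nd.r)
    (hl : f (Fin.last (Nd.ρ c)) = c) (he : ∀ i : Fin (Nd.ρ c), Nd.E (f i.castSucc) (f i.succ)) :
    Net.dep c = Nd.ρ c := by
  apply IsGreatest.csSup_eq
  constructor
  · exact ⟨f, h0, hl, he⟩
  · intro n hn
    have h : Nd.ρ Nd.r + n ≤ Nd.ρ c := Nd.walk_rho hn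
    have h0 : Nd.ρ Nd.r = 0 := rfl
    omega

lemma Net_dep_u : Net.dep Nd.u = 2 :=
  Net_dep Nd.u ![.r, .v, .u] (by decide) (by decide) (by decide)

lemma Net_lN : Net.lN = 4 := by
  apply IsGreatest.csSup_eq
  constructor
  · exact ⟨2, ![.r, .v, .u, .w, .lk], by decide, by decide, by decide⟩
  · rintro n ⟨x, hx⟩
    fin_cases x
    · have h : Nd.ρ Nd.r + n ≤ Nd.ρ Nd.li := Nd.walk_rho hx
      have h0 : Nd.ρ Nd.r = 0 := rfl
      have h1 : Nd.ρ Nd.li ≤ 4 := by decide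
      omega
    · have h : Nd.ρ Nd.r + n ≤ Nd.ρ Nd.lj := Nd.walk_rho hx
      have h0 : Nd.ρ Nd.r = 0 := rfl
      have h1 : Nd.ρ Nd.lj ≤ 4 := by decide
      omega
    · have h : Nd.ρ Nd.r + n ≤ Nd.ρ Nd.lk := Nd.walk_rho hx
      have h0 : Nd.ρ Nd.r = 0 := rfl
      have h1 : Nd.ρ Nd.lk ≤ 4 := by decide
      omega

lemma lca_u {a b : Nd} (ha : Relation.ReflTransGen Nd.E Nd.u a)
    (hb : Relation.ReflTransGen Nd.E Nd.u b)
    (hab : ∀ x : Nd, Nd.reachB .u x = true → Nd.reachB x a = true →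
      Nd.reachB x b = true → x = Nd.u) :
    Net.IsLCA a b Nd.u := by
  refine ⟨ha, hb, fun x h1 h2 h3 => hab x (Nd.rtg_reachB h1) (Nd.rtg_reachB h2) (Nd.rtg_reachB h3)⟩

lemma lca_unique {a b c : Nd} (ha : Relation.ReflTransGen Nd.E Nd.u a)
    (hb : Relation.ReflTransGen Nd.E Nd.u b)
    (hcab : ∀ x : Nd, Nd.reachB x a = true → Nd.reachB x b = true →
      x = Nd.r ∨ x = Nd.v ∨ x = Nd.u)
    (h : Net.IsLCA a b c) : c = Nd.u := by
  obtain ⟨h1, h2, h3⟩ := h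
  rcases hcab c (Nd.rtg_reachB h1) (Nd.rtg_reachB h2) with rfl | rfl | rfl
  · exact absurd (h3 Nd.u Nd.anc_r_u ha hb) (by decide)
  · exact absurd (h3 Nd.u Nd.anc_v_u ha hb) (by decide)
  · rfl

lemma Net_hN (i j : Fin 3)
    (ha : Relation.ReflTransGen Nd.E Nd.u (Net.leaf i))
    (hb : Relation.ReflTransGen Nd.E Nd.u (Net.leaf j))
    (hab : ∀ x : Nd, Nd.reachB .u x = true → Nd.reachB x (Net.leaf i) = true →
      Nd.reachB x (Net.leaf j) = true → x = Nd.u)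
    (hcab : ∀ x : Nd, Nd.reachB x (Net.leaf i) = true → Nd.reachB x (Net.leaf j) = true →
      x = Nd.r ∨ x = Nd.v ∨ x = Nd.u) :
    Net.hN i j = 2 := by
  apply IsLeast.csInf_eq
  constructor
  · exact ⟨Nd.u, lca_u ha hb hab, by rw [Net_lN, Net_dep_u]⟩
  · rintro m ⟨c, hc, rfl⟩
    have := lca_unique ha hb hcab hc
    subst this
    rw [Net_lN, Net_dep_u]


/-- the converse of the height criterion fails: there is a rooted
phylogenetic network `N` and distinct leaves `i, j, k` with `ij|k` consistent with `N`
but `h_N(i,j) ≥ h_N(i,k)` and `h_N(i,j) ≥ h_N(j,k)`. -/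


theorem height_criterion_converse_fails :
    ∃ (X : Type) (N : PhyloNet X) (i j k : X),
      i ≠ j ∧ i ≠ k ∧ j ≠ k ∧ N.TripCons i j k ∧
      N.hN i k ≤ N.hN i j ∧ N.hN j k ≤ N.hN i j := by
  refine ⟨Fin 3, Net, 0, 1, 2, by decide, by decide, by decide, ?_, ?_, ?_⟩
  · exact ⟨Nd.u, Nd.v, by decide, 1, 1, 1, 2,
      ![.u, .li], ![.u, .lj], ![.v, .u], ![.v, .w, .lk],
      ⟨by decide, by decide, by decide, by decide⟩,
      ⟨by decide, by decide, by decide, by decide⟩,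
      ⟨by decide, by decide, by decide, by decide⟩,
      ⟨by decide, by decide, by decide, by decide⟩,
      by unfold IntDisj; decide, by unfold IntDisj; decide, by unfold IntDisj; decide,
      by unfold IntDisj; decide, by unfold IntDisj; decide, by unfold IntDisj; decide⟩
  · rw [Net_hN 0 2 Nd.anc_u_li Nd.anc_u_lk (by decide) (by decide),
        Net_hN 0 1 Nd.anc_u_li Nd.anc_u_lj (by decide) (by decide)]
  · rw [Net_hN 1 2 Nd.anc_u_lj Nd.anc_u_lk (by decide) (by decide),
        Net_hN 0 1 Nd.anc_u_li Nd.anc_u_lj (by decide) (by decide)]
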